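/- arXiv:0812.2114 — 2 statements merged into one kernel-verified Lean document; each statement's English description precedes it below -/
import Mathlib

section
/- For n ∈ {3, 4, 6}, every nontrivial normal subgroup of the group Gₙ = ℤ² ⋊ ℤₙ has finite index in Gₙ. -/
open Complex AffineEquiv

noncomputable def VCaff (ρ : ℂ) (hρ : ρ ≠ 0) (lam : ℂ) : ℂ ≃ᵃ[ℝ] ℂ :=
  ((DistribMulAction.toLinearEquiv ℝ ℂ (Units.mk0 ρ hρ)).toAffineEquiv).trans
    (AffineEquiv.constVAdd ℝ ℂ lam)

lemma VCaff_apply (ρ : ℂ) (hρ : ρ ≠ 0) (lam z : ℂ) : VCaff ρ hρ lam z = ρ * z + lam := by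
  simp [VCaff, Units.smul_def, add_comm]

lemma VCaff_symm_apply (ρ : ℂ) (hρ : ρ ≠ 0) (lam w : ℂ) :
    (VCaff ρ hρ lam).symm w = ρ⁻¹ * (w - lam) := by
  apply (VCaff ρ hρ lam).injective
  rw [AffineEquiv.apply_symm_apply, VCaff_apply]
  field_simp
  ring

lemma VCtr_apply (μ z : ℂ) : AffineEquiv.constVAdd ℝ ℂ μ z = z + μ := by
  simp [add_comm]

lemma VCtr_mul (u v : ℂ) : AffineEquiv.constVAdd ℝ ℂ u * AffineEquiv.constVAdd ℝ ℂ v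
    = AffineEquiv.constVAdd ℝ ℂ (u + v) := by
  rw [AffineEquiv.mul_def, ← AffineEquiv.constVAdd_add]

lemma VCkey (n : ℕ) (hn : 0 < n) (Λ : AddSubgroup ℂ) (a b : ℂ) (ζ : ℂ)
    (hζeq : ζ = Complex.exp (2 * Real.pi * Complex.I / n))
    (hΛ : Λ = AddSubgroup.closure {a, b})
    (hζΛ : ∀ j : ℤ, ∀ m ∈ Λ, ζ ^ j * m ∈ Λ)
    (G : Subgroup (ℂ ≃ᵃ[ℝ] ℂ))
    (hG : ∀ f : ℂ ≃ᵃ[ℝ] ℂ, f ∈ G ↔ ∃ (k : ℤ) (lam : ℂ), lam ∈ Λ ∧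
      ∀ z : ℂ, f z = ζ ^ k * z + lam)
    (N : Subgroup G)
    (μ₁ μ₂ : ℂ) (x₁ y₁ x₂ y₂ : ℤ)
    (h1 : μ₁ = (x₁:ℂ) * a + (y₁:ℂ) * b) (h2 : μ₂ = (x₂:ℂ) * a + (y₂:ℂ) * b)
    (hd : x₁ * y₂ - x₂ * y₁ ≠ 0)
    (hu₁ : ∃ u : G, (u : ℂ ≃ᵃ[ℝ] ℂ) = AffineEquiv.constVAdd ℝ ℂ μ₁ ∧ u ∈ N)
    (hu₂ : ∃ u : G, (u : ℂ ≃ᵃ[ℝ] ℂ) = AffineEquiv.constVAdd ℝ ℂ μ₂ ∧ u ∈ N) :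
    N.FiniteIndex := by
  obtain ⟨u₁, hu₁e, hu₁N⟩ := hu₁
  obtain ⟨u₂, hu₂e, hu₂N⟩ := hu₂
  have hζ0 : ζ ≠ 0 := by rw [hζeq]; exact Complex.exp_ne_zero _
  have hζn : ζ ^ n = 1 := by
    rw [hζeq, ← Complex.exp_nat_mul, mul_div_cancel₀]
    · exact Complex.exp_two_pi_mul_I
    · exact_mod_cast hn.ne'
  have hζred : ∀ k : ℤ, ζ ^ k = ζ ^ ((k % (n:ℤ)).toNat) := by
    intro k
    have h1' : ζ ^ ((n:ℤ) * (k / (n:ℤ))) = 1 := by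
      rw [zpow_mul]
      norm_cast
      rw [hζn, one_zpow]
    calc ζ ^ k = ζ ^ ((n:ℤ) * (k / (n:ℤ)) + k % (n:ℤ)) := by rw [Int.mul_ediv_add_emod]
      _ = ζ ^ ((n:ℤ) * (k / (n:ℤ))) * ζ ^ (k % (n:ℤ)) := zpow_add₀ hζ0 _ _
      _ = ζ ^ ((k % (n:ℤ)).toNat) := by
          rw [h1', one_mul, ← zpow_natCast,
            Int.toNat_of_nonneg (Int.emod_nonneg k (by exact_mod_cast hn.ne'))]
  set d : ℤ := x₁ * y₂ - x₂ * y₁ with hdd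
  have hmemΛ : ∀ x y : ℤ, (x:ℂ) * a + (y:ℂ) * b ∈ Λ := fun x y => by
    rw [hΛ]
    exact AddSubgroup.mem_closure_pair.mpr ⟨x, y, by push_cast [zsmul_eq_mul]; ring⟩
  -- the translation subgroup
  set T : Subgroup (ℂ ≃ᵃ[ℝ] ℂ) :=
    { carrier := {f | ∃ m ∈ Λ, f = AffineEquiv.constVAdd ℝ ℂ ((d:ℂ) * m)}
      one_mem' := ⟨0, zero_mem _, by
        rw [mul_zero]
        exact (AffineEquiv.constVAdd_zero ℝ ℂ).symm⟩
      mul_mem' := by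
        rintro f g ⟨m1, hm1, rfl⟩ ⟨m2, hm2, rfl⟩
        exact ⟨m1 + m2, add_mem hm1 hm2, by rw [VCtr_mul, mul_add]⟩
      inv_mem' := by
        rintro f ⟨m, hm, rfl⟩
        refine ⟨-m, neg_mem hm, ?_⟩
        show (AffineEquiv.constVAdd ℝ ℂ ((d:ℂ) * m)).symm = _
        rw [AffineEquiv.constVAdd_symm]
        ring_nf } with hT
  have hTmem : ∀ f : ℂ ≃ᵃ[ℝ] ℂ, f ∈ T ↔ ∃ m ∈ Λ, f = AffineEquiv.constVAdd ℝ ℂ ((d:ℂ) * m) :=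
    fun f => Iff.rfl
  have hTG : T ≤ G := by
    rintro f ⟨m, hm, rfl⟩
    refine (hG _).mpr ⟨0, (d:ℂ) * m, ?_, fun z => ?_⟩
    · rcases (show ((d:ℂ) * m = (d • m : ℂ)) by simp [zsmul_eq_mul]) with h
      rw [h]; exact zsmul_mem hm d
    · rw [zpow_zero, one_mul]
      show (d:ℂ) * m + z = z + (d:ℂ) * m
      ring
  -- T.subgroupOf G ≤ N
  have hTN : T.subgroupOf G ≤ N := by
    rintro ⟨f, hfG⟩ hfT
    rw [Subgroup.mem_subgroupOf] at hfT
    obtain ⟨m, hmΛ, hfe⟩ := hfT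
    obtain ⟨x, y, hxy⟩ := AddSubgroup.mem_closure_pair.mp (hΛ ▸ hmΛ)
    have key : (⟨f, hfG⟩ : G) = u₁ ^ (x * y₂ - y * x₂) * u₂ ^ (y * x₁ - x * y₁) := by
      apply Subtype.ext
      rw [Subgroup.coe_mul, SubgroupClass.coe_zpow, SubgroupClass.coe_zpow, hu₁e, hu₂e,
        ← AffineEquiv.constVAdd_zsmul, ← AffineEquiv.constVAdd_zsmul, VCtr_mul, hfe]
      congr 1
      have hm' : m = (x:ℂ) * a + (y:ℂ) * b := by
        rw [← hxy]; push_cast [zsmul_eq_mul]; ring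
      rw [hm', h1, h2, hdd]
      push_cast [zsmul_eq_mul]
      ring
    rw [key]
    exact mul_mem (zpow_mem hu₁N _) (zpow_mem hu₂N _)
  -- finiteness of the quotient by the translation subgroup
  have hd0 : d ≠ 0 := hd
  set D : ℕ := d.natAbs with hDdef
  have hDpos : 0 < D := Int.natAbs_pos.mpr hd0
  have hrepG : ∀ k x y : ℤ, VCaff (ζ ^ k) (zpow_ne_zero _ hζ0) ((x:ℂ) * a + (y:ℂ) * b) ∈ G :=
    fun k x y => (hG _).mpr ⟨k, _, hmemΛ x y, fun z => VCaff_apply _ _ _ z⟩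
  have hsurj : Function.Surjective (fun p : Fin n × Fin D × Fin D =>
      (QuotientGroup.mk (⟨_, hrepG ((p.1 : ℕ) : ℤ) ((p.2.1 : ℕ) : ℤ) ((p.2.2 : ℕ) : ℤ)⟩ : G)
        : G ⧸ T.subgroupOf G)) := by
    intro q
    refine QuotientGroup.induction_on q ?_
    intro g
    obtain ⟨k, lam, hlamΛ, hgz⟩ := (hG g).mp g.2
    obtain ⟨x, y, hxy⟩ := AddSubgroup.mem_closure_pair.mp (hΛ ▸ hlamΛ)
    have hxy' : lam = (x:ℂ) * a + (y:ℂ) * b := by rw [← hxy]; push_cast [zsmul_eq_mul]; ring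
    have hn' : (0:ℤ) < (n:ℤ) := by exact_mod_cast hn
    have hD' : (0:ℤ) < (D:ℤ) := by exact_mod_cast hDpos
    have hk1 := Int.emod_nonneg k hn'.ne'
    have hk2 := Int.emod_lt_of_pos k hn'
    have hx1 := Int.emod_nonneg x hD'.ne'
    have hx2 := Int.emod_lt_of_pos x hD'
    have hy1 := Int.emod_nonneg y hD'.ne'
    have hy2 := Int.emod_lt_of_pos y hD'
    have hdvd : (d:ℤ) ∣ ((D:ℕ):ℤ) := Int.dvd_natAbs.mpr dvd_rfl
    obtain ⟨sx, hsx⟩ : (d:ℤ) ∣ (x - x % (D:ℤ)) := by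
      have hh : x - x % (D:ℤ) = (D:ℤ) * (x / (D:ℤ)) := by
        have := Int.mul_ediv_add_emod x (D:ℤ); linarith
      rw [hh]; exact hdvd.mul_right _
    obtain ⟨sy, hsy⟩ : (d:ℤ) ∣ (y - y % (D:ℤ)) := by
      have hh : y - y % (D:ℤ) = (D:ℤ) * (y / (D:ℤ)) := by
        have := Int.mul_ediv_add_emod y (D:ℤ); linarith
      rw [hh]; exact hdvd.mul_right _
    refine ⟨⟨⟨(k % (n:ℤ)).toNat, by omega⟩, ⟨(x % (D:ℤ)).toNat, by omega⟩,
      ⟨(y % (D:ℤ)).toNat, by omega⟩⟩, ?_⟩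
    rw [QuotientGroup.eq, Subgroup.mem_subgroupOf]
    set κ : ℤ := (((k % (n:ℤ)).toNat : ℕ) : ℤ) with hκdef
    have hζκ0 : ζ ^ κ ≠ 0 := zpow_ne_zero _ hζ0
    have hζk : ζ ^ k = ζ ^ κ := by rw [hζred k, hκdef, zpow_natCast]
    have e1 : (((x % (D:ℤ)).toNat : ℕ) : ℤ) = x % (D:ℤ) := Int.toNat_of_nonneg hx1
    have e2 : (((y % (D:ℤ)).toNat : ℕ) : ℤ) = y % (D:ℤ) := Int.toNat_of_nonneg hy1
    refine ⟨ζ ^ (-κ) * ((sx:ℂ) * a + (sy:ℂ) * b), hζΛ _ _ (hmemΛ sx sy), ?_⟩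
    have hrl : lam - (((((x % (D:ℤ)).toNat : ℕ) : ℤ):ℂ) * a + 
        (((((y % (D:ℤ)).toNat : ℕ) : ℤ)):ℂ) * b) = (d:ℂ) * ((sx:ℂ) * a + (sy:ℂ) * b) := by
      rw [hxy']
      have c1 : ((x:ℂ) - ((((x % (D:ℤ)).toNat : ℕ) : ℤ):ℂ)) = (d:ℂ) * (sx:ℂ) := by
        rw [e1]; exact_mod_cast congrArg (Int.cast : ℤ → ℂ) hsx
      have c2 : ((y:ℂ) - ((((y % (D:ℤ)).toNat : ℕ) : ℤ):ℂ)) = (d:ℂ) * (sy:ℂ) := by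
        rw [e2]; exact_mod_cast congrArg (Int.cast : ℤ → ℂ) hsy
      linear_combination c1 * a + c2 * b
    ext z
    show (VCaff (ζ ^ κ) (zpow_ne_zero _ hζ0) _).symm ((g : ℂ ≃ᵃ[ℝ] ℂ) z)
      = AffineEquiv.constVAdd ℝ ℂ ((d:ℂ) * (ζ ^ (-κ) * ((sx:ℂ) * a + (sy:ℂ) * b))) z
    rw [VCaff_symm_apply, hgz z, hζk, VCtr_apply, add_sub_assoc, hrl, zpow_neg]
    field_simp
  haveI : Finite (G ⧸ T.subgroupOf G) := Finite.of_surjective _ hsurj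
  have h0 : (T.subgroupOf G).index ≠ 0 := Subgroup.index_ne_zero_of_finite
  exact ⟨fun hN0 => h0 (Nat.eq_zero_of_zero_dvd (hN0 ▸ Subgroup.index_dvd_of_le hTN))⟩

lemma VCzeta_im (n : ℕ) (hn : n = 3 ∨ n = 4 ∨ n = 6) :
    (Complex.exp (2 * Real.pi * Complex.I / n)).im ≠ 0 := by
  have h2 : (2:ℝ) < n := by rcases hn with h|h|h <;> rw [h] <;> norm_num
  have hn0 : (0:ℝ) < n := by linarith
  have hform : (2 * Real.pi * Complex.I / n : ℂ) = ((2 * Real.pi / n : ℝ) : ℂ) * Complex.I := by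
    push_cast; ring
  rw [hform, Complex.exp_ofReal_mul_I_im]
  have hpi := Real.pi_pos
  have h1 : 0 < 2 * Real.pi / n := by positivity
  have h2' : 2 * Real.pi / n < Real.pi := by
    rw [div_lt_iff₀ hn0]; nlinarith
  exact (Real.sin_pos_of_pos_of_lt_pi h1 h2').ne'

lemma VCim (ζ : ℂ) (hζim : ζ.im ≠ 0) (p q : ℤ) (h : (p:ℂ) - (q:ℂ) * ζ = 0) :
    p = 0 ∧ q = 0 := by
  have him := congrArg Complex.im h
  simp [Complex.sub_im, Complex.mul_im] at him
  rcases him with hq | hz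
  · constructor
    · have hre := congrArg Complex.re h
      simp [Complex.sub_re, Complex.mul_re, hq] at hre
      exact_mod_cast hre
    · exact_mod_cast hq
  · exact absurd hz hζim

/-- For `n ∈ {3,4,6}`, in the group `Gₙ = ℤ² ⋊ ℤₙ`, realized as the group of affine
transformations `z ↦ ζᵏ z + λ` of `ℂ` with `ζ = exp(2πi/n)` and `λ` in a `ζ`-invariant
lattice `Λ`, every nontrivial normal subgroup has finite index. -/
theorem vanishing_cycles_stmt0
    (n : ℕ) (hn : n = 3 ∨ n = 4 ∨ n = 6)
    (Λ : AddSubgroup ℂ) (a b : ℂ)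
    (hab : LinearIndependent ℝ ![a, b])
    (hΛ : Λ = AddSubgroup.closure {a, b})
    (hinv : ∀ lam ∈ Λ, Complex.exp (2 * Real.pi * Complex.I / n) * lam ∈ Λ)
    (G : Subgroup (ℂ ≃ᵃ[ℝ] ℂ))
    (hG : ∀ f : ℂ ≃ᵃ[ℝ] ℂ, f ∈ G ↔ ∃ (k : ℤ) (lam : ℂ), lam ∈ Λ ∧
      ∀ z : ℂ, f z = Complex.exp (2 * Real.pi * Complex.I / n) ^ k * z + lam)
    (N : Subgroup G) (hN : N.Normal) (hne : N ≠ ⊥) :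
    N.FiniteIndex := by
  have hn0 : 0 < n := by rcases hn with h|h|h <;> omega
  have hζim : (Complex.exp (2 * Real.pi * Complex.I / n)).im ≠ 0 := VCzeta_im n hn
  set ζ : ℂ := Complex.exp (2 * Real.pi * Complex.I / n) with hζdef
  have hζ0 : ζ ≠ 0 := Complex.exp_ne_zero _
  have hζn : ζ ^ n = 1 := by
    rw [hζdef, ← Complex.exp_nat_mul, mul_div_cancel₀]
    · exact Complex.exp_two_pi_mul_I
    · exact_mod_cast hn0.ne'
  have hζnat : ∀ j : ℕ, ∀ m ∈ Λ, ζ ^ j * m ∈ Λ := by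
    intro j
    induction j with
    | zero => intro m hm; simpa using hm
    | succ j ih =>
        intro m hm
        have : ζ ^ (j + 1) * m = ζ ^ j * (ζ * m) := by rw [pow_succ]; ring
        rw [this]
        exact ih _ (hinv m hm)
  have hζred : ∀ k : ℤ, ζ ^ k = ζ ^ ((k % (n:ℤ)).toNat) := by
    intro k
    have h1' : ζ ^ ((n:ℤ) * (k / (n:ℤ))) = 1 := by
      rw [zpow_mul]; norm_cast; rw [hζn, one_zpow]
    calc ζ ^ k = ζ ^ ((n:ℤ) * (k / (n:ℤ)) + k % (n:ℤ)) := by rw [Int.mul_ediv_add_emod]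
      _ = ζ ^ ((n:ℤ) * (k / (n:ℤ))) * ζ ^ (k % (n:ℤ)) := zpow_add₀ hζ0 _ _
      _ = ζ ^ ((k % (n:ℤ)).toNat) := by
          rw [h1', one_mul, ← zpow_natCast,
            Int.toNat_of_nonneg (Int.emod_nonneg k (by exact_mod_cast hn0.ne'))]
  have hζΛ : ∀ j : ℤ, ∀ m ∈ Λ, ζ ^ j * m ∈ Λ := by
    intro j m hm
    rw [hζred j]
    exact hζnat _ m hm
  have hcoef := LinearIndependent.pair_iff.mp hab
  have hcoefZ : ∀ s t : ℤ, (s:ℂ) * a + (t:ℂ) * b = 0 → s = 0 ∧ t = 0 := by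
    intro s t h
    have h2 := hcoef (s:ℝ) (t:ℝ) ?_
    · exact ⟨by exact_mod_cast h2.1, by exact_mod_cast h2.2⟩
    · rw [Complex.real_smul, Complex.real_smul]; push_cast; exact_mod_cast h
  have ha0 : a ≠ 0 := by
    intro h
    have := (hcoef 1 0 (by simp [h])).1
    norm_num at this
  have haΛ : a ∈ Λ := hΛ ▸ AddSubgroup.subset_closure (by simp)
  have hbΛ : b ∈ Λ := hΛ ▸ AddSubgroup.subset_closure (by simp)
  -- extract a nontrivial element
  obtain ⟨g, hg1⟩ := Subgroup.ne_bot_iff_exists_ne_one.mp hne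
  set g0 : G := (g : G) with hg0def
  have hg0N : g0 ∈ N := g.2
  have hg0ne : g0 ≠ 1 := fun h => hg1 (Subtype.ext h)
  obtain ⟨k, lam, hlamΛ, hgz⟩ := (hG g0).mp g0.2
  by_cases hk : ζ ^ k = 1
  · -- case A : g0 is a nontrivial translation
    have hgz' : ∀ z, (g0 : ℂ ≃ᵃ[ℝ] ℂ) z = z + lam := fun z => by rw [hgz z, hk, one_mul]
    have hge : (g0 : ℂ ≃ᵃ[ℝ] ℂ) = AffineEquiv.constVAdd ℝ ℂ lam := by
      ext z; rw [hgz' z, VCtr_apply]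
    have hlam0 : lam ≠ 0 := by
      intro h
      apply hg0ne
      apply Subtype.ext
      rw [hge, h, AffineEquiv.constVAdd_zero]
      rfl
    have hrG : VCaff ζ hζ0 0 ∈ G :=
      (hG _).mpr ⟨1, 0, zero_mem _, fun z => by rw [VCaff_apply, zpow_one]⟩
    set r : G := ⟨VCaff ζ hζ0 0, hrG⟩ with hrdef
    have hconj : r * g0 * r⁻¹ ∈ N := hN.conj_mem g0 hg0N r
    have hconje : ((r * g0 * r⁻¹ : G) : ℂ ≃ᵃ[ℝ] ℂ) = AffineEquiv.constVAdd ℝ ℂ (ζ * lam) := by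
      ext z
      show (VCaff ζ hζ0 0) ((g0 : ℂ ≃ᵃ[ℝ] ℂ) ((VCaff ζ hζ0 0).symm z)) = _
      rw [VCaff_symm_apply, hgz', VCaff_apply, VCtr_apply]
      field_simp
      ring
    have hζlamΛ : ζ * lam ∈ Λ := by
      have := hζΛ 1 lam hlamΛ
      rwa [zpow_one] at this
    obtain ⟨x₁, y₁, h1'⟩ := AddSubgroup.mem_closure_pair.mp (hΛ ▸ hlamΛ)
    obtain ⟨x₂, y₂, h2'⟩ := AddSubgroup.mem_closure_pair.mp (hΛ ▸ hζlamΛ)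
    have h1 : lam = (x₁:ℂ) * a + (y₁:ℂ) * b := by rw [← h1']; push_cast [zsmul_eq_mul]; ring
    have h2 : ζ * lam = (x₂:ℂ) * a + (y₂:ℂ) * b := by rw [← h2']; push_cast [zsmul_eq_mul]; ring
    have hdne : x₁ * y₂ - x₂ * y₁ ≠ 0 := by
      intro hd0
      have hA : ((y₂:ℂ) - (y₁:ℂ) * ζ) * lam = 0 := by
        have : (y₂:ℂ) * lam - (y₁:ℂ) * (ζ * lam) = ((x₁ * y₂ - x₂ * y₁ : ℤ):ℂ) * a := by
          rw [h2, h1]; push_cast; ring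
        rw [hd0] at this
        push_cast at this
        linear_combination this
      have hB : ((x₂:ℂ) - (x₁:ℂ) * ζ) * lam = 0 := by
        have : (x₁:ℂ) * (ζ * lam) - (x₂:ℂ) * lam = ((x₁ * y₂ - x₂ * y₁ : ℤ):ℂ) * b := by
          rw [h2, h1]; push_cast; ring
        rw [hd0] at this
        push_cast at this
        linear_combination -this
      have hy := VCim ζ hζim y₂ y₁ ((mul_eq_zero.mp hA).resolve_right hlam0)
      have hx := VCim ζ hζim x₂ x₁ ((mul_eq_zero.mp hB).resolve_right hlam0)
      apply hlam0
      rw [h1, hx.2, hy.2]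
      norm_num
    exact VCkey n hn0 Λ a b ζ hζdef hΛ hζΛ G hG N lam (ζ * lam) x₁ y₁ x₂ y₂ h1 h2 hdne
      ⟨g0, hge, hg0N⟩ ⟨r * g0 * r⁻¹, hconje, hconj⟩
  · -- case B : g0 has a nontrivial rotation part
    set c : ℂ := 1 - ζ ^ k with hcdef
    have hc0 : c ≠ 0 := by
      intro h
      apply hk
      have := sub_eq_zero.mp h
      exact this.symm
    have hζk0 : ζ ^ k ≠ 0 := zpow_ne_zero _ hζ0
    have hsymm : ∀ z, ((g0 : ℂ ≃ᵃ[ℝ] ℂ)).symm z = (ζ ^ k)⁻¹ * (z - lam) := by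
      intro z
      apply (g0 : ℂ ≃ᵃ[ℝ] ℂ).injective
      rw [AffineEquiv.apply_symm_apply, hgz]
      field_simp
      ring
    have htG : ∀ μ, μ ∈ Λ → AffineEquiv.constVAdd ℝ ℂ μ ∈ G := fun μ hμ =>
      (hG _).mpr ⟨0, μ, hμ, fun z => by rw [VCtr_apply, zpow_zero, one_mul]⟩
    have hwmem : ∀ (μ : ℂ) (hμ : μ ∈ Λ),
        ((⟨_, htG μ hμ⟩ : G) * g0 * (⟨_, htG μ hμ⟩ : G)⁻¹ * g0⁻¹ ∈ N) ∧
        (((⟨_, htG μ hμ⟩ : G) * g0 * (⟨_, htG μ hμ⟩ : G)⁻¹ * g0⁻¹ : G) : ℂ ≃ᵃ[ℝ] ℂ)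
          = AffineEquiv.constVAdd ℝ ℂ (c * μ) := by
      intro μ hμ
      constructor
      · exact mul_mem (hN.conj_mem g0 hg0N _) (inv_mem hg0N)
      · ext z
        show (AffineEquiv.constVAdd ℝ ℂ μ) ((g0 : ℂ ≃ᵃ[ℝ] ℂ)
          ((AffineEquiv.constVAdd ℝ ℂ μ).symm ((g0 : ℂ ≃ᵃ[ℝ] ℂ).symm z))) = _
        rw [hsymm, AffineEquiv.constVAdd_symm, VCtr_apply, hgz, VCtr_apply, VCtr_apply, hcdef]
        field_simp
        ring
    have hμ1Λ : c * a ∈ Λ := by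
      have : c * a = a - ζ ^ k * a := by rw [hcdef]; ring
      rw [this]
      exact sub_mem haΛ (hζΛ k a haΛ)
    have hμ2Λ : c * b ∈ Λ := by
      have : c * b = b - ζ ^ k * b := by rw [hcdef]; ring
      rw [this]
      exact sub_mem hbΛ (hζΛ k b hbΛ)
    obtain ⟨x₁, y₁, h1'⟩ := AddSubgroup.mem_closure_pair.mp (hΛ ▸ hμ1Λ)
    obtain ⟨x₂, y₂, h2'⟩ := AddSubgroup.mem_closure_pair.mp (hΛ ▸ hμ2Λ)
    have h1 : c * a = (x₁:ℂ) * a + (y₁:ℂ) * b := by rw [← h1']; push_cast [zsmul_eq_mul]; ring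
    have h2 : c * b = (x₂:ℂ) * a + (y₂:ℂ) * b := by rw [← h2']; push_cast [zsmul_eq_mul]; ring
    have hdne : x₁ * y₂ - x₂ * y₁ ≠ 0 := by
      intro hd0
      have hA : (y₂:ℂ) * a + (-y₁:ℂ) * b = 0 := by
        have h3 : c * ((y₂:ℂ) * a + (-y₁:ℂ) * b) = ((x₁ * y₂ - x₂ * y₁ : ℤ):ℂ) * a := by
          have e1 : c * ((y₂:ℂ) * a) = (y₂:ℂ) * (c * a) := by ring
          have e2 : c * ((-y₁:ℂ) * b) = (-y₁:ℂ) * (c * b) := by ring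
          rw [mul_add, e1, e2, h1, h2]; push_cast; ring
        rw [hd0] at h3
        push_cast at h3
        rw [zero_mul] at h3
        exact (mul_eq_zero.mp h3).resolve_left hc0
      have hB : (-x₂:ℂ) * a + (x₁:ℂ) * b = 0 := by
        have h3 : c * ((-x₂:ℂ) * a + (x₁:ℂ) * b) = ((x₁ * y₂ - x₂ * y₁ : ℤ):ℂ) * b := by
          have e1 : c * ((-x₂:ℂ) * a) = (-x₂:ℂ) * (c * a) := by ring
          have e2 : c * ((x₁:ℂ) * b) = (x₁:ℂ) * (c * b) := by ring
          rw [mul_add, e1, e2, h1, h2]; push_cast; ring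
        rw [hd0] at h3
        push_cast at h3
        rw [zero_mul] at h3
        exact (mul_eq_zero.mp h3).resolve_left hc0
      have hy := hcoefZ y₂ (-y₁) (by exact_mod_cast hA)
      have hx := hcoefZ (-x₂) x₁ (by exact_mod_cast hB)
      apply ha0
      have hca : c * a = 0 := by
        have hx1 : x₁ = (0:ℤ) := hx.2
        have hy1 : y₁ = (0:ℤ) := by have := hy.2; omega
        rw [h1, hx1, hy1]
        norm_num
      exact (mul_eq_zero.mp hca).resolve_left hc0
    obtain ⟨hw1N, hw1e⟩ := hwmem a haΛ
    obtain ⟨hw2N, hw2e⟩ := hwmem b hbΛ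
    exact VCkey n hn0 Λ a b ζ hζdef hΛ hζΛ G hG N (c * a) (c * b) x₁ y₁ x₂ y₂ h1 h2 hdne
      ⟨_, hw1e, hw1N⟩ ⟨_, hw2e, hw2N⟩
end

section
/- In the group G₂ = ℤ² ⋊ ℤ₂ (with ℤ₂ acting by −1), every nontrivial normal subgroup that contains a nontrivial rotation (an element of the form z ↦ −z + λ) has finite index; consequently every nontrivial normal subgroup of infinite index is generated by a single translation. -/
namespace VC
noncomputable def Tr (x : ℂ) : ℂ ≃ᵃ[ℝ] ℂ := AffineEquiv.constVAdd ℝ ℂ x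
noncomputable def Ro (x : ℂ) : ℂ ≃ᵃ[ℝ] ℂ :=
  (LinearEquiv.neg ℝ).toAffineEquiv.trans (AffineEquiv.constVAdd ℝ ℂ x)

lemma Tr_apply (x z : ℂ) : Tr x z = z + x := add_comm x z

lemma Ro_apply (x z : ℂ) : Ro x z = -z + x := by
  show x +ᵥ ((LinearEquiv.neg ℝ).toAffineEquiv z) = -z + x
  simp [LinearEquiv.coe_toAffineEquiv]; exact add_comm x (-z)

lemma mul_apply (f g : ℂ ≃ᵃ[ℝ] ℂ) (z : ℂ) : (f * g) z = f (g z) := rfl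

lemma one_apply' (z : ℂ) : (1 : ℂ ≃ᵃ[ℝ] ℂ) z = z := rfl

lemma ext_ae {f g : ℂ ≃ᵃ[ℝ] ℂ} (h : ∀ z, f z = g z) : f = g := by
  ext z; exact h z

lemma Tr_zpow (x : ℂ) (t : ℤ) : (Tr x) ^ t = Tr (t • x) := by
  have h : ∀ y w : ℂ, Tr (y + w) = Tr y * Tr w := by
    intro y w; apply ext_ae; intro z; simp [mul_apply, Tr_apply]; ring
  let φ : ℂ →+ Additive (ℂ ≃ᵃ[ℝ] ℂ) :=
    AddMonoidHom.mk' (fun y => Additive.ofMul (Tr y)) (fun y w => congrArg Additive.ofMul (h y w))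
  have := map_zsmul φ t x
  simpa [φ, ← ofMul_zpow] using this.symm

lemma inv_apply {f : ℂ ≃ᵃ[ℝ] ℂ} {ε lam : ℂ} (hε : ε * ε = 1)
    (h : ∀ z, f z = ε * z + lam) (z : ℂ) : f⁻¹ z = ε * z - ε * lam := by
  have key : f (ε * z - ε * lam) = z := by rw [h]; linear_combination (z - lam) * hε
  calc f⁻¹ z = f⁻¹ (f (ε * z - ε * lam)) := by rw [key]
  _ = ε * z - ε * lam := by rw [AffineEquiv.inv_def]; exact f.symm_apply_apply _

section Ctx

variable {Λ : AddSubgroup ℂ} {a b : ℂ} {G : Subgroup (ℂ ≃ᵃ[ℝ] ℂ)}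
variable (hG : ∀ f : ℂ ≃ᵃ[ℝ] ℂ, f ∈ G ↔ ∃ (ε : ℂ) (lam : ℂ), (ε = 1 ∨ ε = -1) ∧ lam ∈ Λ ∧
      ∀ z : ℂ, f z = ε * z + lam)
variable (hΛ : Λ = AddSubgroup.closure {a, b})

include hG in
lemma Tr_mem {x : ℂ} (hx : x ∈ Λ) : Tr x ∈ G :=
  (hG _).2 ⟨1, x, Or.inl rfl, hx, fun z => by rw [Tr_apply]; ring⟩

include hG in
lemma Ro_mem {x : ℂ} (hx : x ∈ Λ) : Ro x ∈ G :=
  (hG _).2 ⟨-1, x, Or.inr rfl, hx, fun z => by rw [Ro_apply]; ring⟩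

include hΛ in
lemma a_mem : a ∈ Λ := hΛ ▸ AddSubgroup.subset_closure (by simp)

include hΛ in
lemma b_mem : b ∈ Λ := hΛ ▸ AddSubgroup.subset_closure (by simp)

include hΛ in
lemma coords {x : ℂ} (hx : x ∈ Λ) : ∃ m n : ℤ, x = m • a + n • b := by
  rw [hΛ] at hx
  obtain ⟨m, n, h⟩ := AddSubgroup.mem_closure_pair.1 hx
  exact ⟨m, n, h.symm⟩

/-- same-coset criterion -/
lemma coset_eq (N : Subgroup G) (r g : G) (ε lam lam' : ℂ) (hε : ε * ε = 1)
    (hr : ∀ z, (r : ℂ ≃ᵃ[ℝ] ℂ) z = ε * z + lam') (hg : ∀ z, (g : ℂ ≃ᵃ[ℝ] ℂ) z = ε * z + lam)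
    (hNh : ∃ h ∈ N, ∀ z, (h : ℂ ≃ᵃ[ℝ] ℂ) z = z + ε * (lam - lam')) :
    (QuotientGroup.mk r : G ⧸ N) = QuotientGroup.mk g := by
  obtain ⟨h, hhN, hh⟩ := hNh
  rw [QuotientGroup.eq]
  have : r⁻¹ * g = h := by
    apply Subtype.ext
    apply ext_ae
    intro z
    push_cast
    rw [mul_apply, hh, hg, inv_apply hε hr]
    linear_combination z * hε
  rw [this]; exact hhN

include hG hΛ in
lemma fin_index (k : ℤ) (hk : k ≠ 0) (N : Subgroup G)
    (hka : ∃ g ∈ N, ∀ z, (g : ℂ ≃ᵃ[ℝ] ℂ) z = z + k • a)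
    (hkb : ∃ g ∈ N, ∀ z, (g : ℂ ≃ᵃ[ℝ] ℂ) z = z + k • b) :
    N.FiniteIndex := by
  obtain ⟨ga, hgaN, hga⟩ := hka
  obtain ⟨gb, hgbN, hgb⟩ := hkb
  have hga' : (ga : ℂ ≃ᵃ[ℝ] ℂ) = Tr (k • a) := ext_ae fun z => by rw [hga, Tr_apply]
  have hgb' : (gb : ℂ ≃ᵃ[ℝ] ℂ) = Tr (k • b) := ext_ae fun z => by rw [hgb, Tr_apply]
  have key : ∀ p q : ℤ, ∃ h ∈ N, ∀ z,
      (h : ℂ ≃ᵃ[ℝ] ℂ) z = z + ((p * k) • a + (q * k) • b) := by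
    intro p q
    refine ⟨ga ^ p * gb ^ q, mul_mem (zpow_mem hgaN p) (zpow_mem hgbN q), fun z => ?_⟩
    push_cast
    rw [hga', hgb', Tr_zpow, Tr_zpow, mul_apply, Tr_apply, Tr_apply]
    simp only [zsmul_eq_mul, smul_smul]
    push_cast
    ring
  set K := k.natAbs with hK
  have hK0 : K ≠ 0 := Int.natAbs_ne_zero.2 hk
  haveI : NeZero K := ⟨hK0⟩
  have hdiv : ∀ m : ℤ, ∃ p : ℤ, m - ((m : ZMod K).val : ℤ) = k * p := by
    intro m
    have h0 : ((m - ((m : ZMod K).val : ℤ) : ℤ) : ZMod K) = 0 := by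
      push_cast
      rw [ZMod.natCast_val, ZMod.cast_id]
      ring
    have hd := (ZMod.intCast_zmod_eq_zero_iff_dvd _ K).1 h0
    rw [hK, Int.natAbs_dvd] at hd
    obtain ⟨p, hp⟩ := hd
    exact ⟨p, hp⟩
  have hmemΛ : ∀ u v : ZMod K, ((u.val : ℤ) • a + (v.val : ℤ) • b) ∈ Λ := fun u v =>
    add_mem (zsmul_mem (a_mem hΛ) _) (zsmul_mem (b_mem hΛ) _)
  let rep : Bool × ZMod K × ZMod K → G ⧸ N := fun p =>
    QuotientGroup.mk (cond p.1
      (⟨Ro ((p.2.1.val : ℤ) • a + (p.2.2.val : ℤ) • b), Ro_mem hG (hmemΛ _ _)⟩ : G)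
      (⟨Tr ((p.2.1.val : ℤ) • a + (p.2.2.val : ℤ) • b), Tr_mem hG (hmemΛ _ _)⟩ : G))
  have hsurj : Function.Surjective rep := by
    intro q
    refine QuotientGroup.induction_on q ?_
    intro g
    obtain ⟨ε, lam, hε, hlam, hg⟩ := (hG (g : ℂ ≃ᵃ[ℝ] ℂ)).1 g.2
    obtain ⟨m, n, hmn⟩ := coords hΛ hlam
    set u : ZMod K := (m : ZMod K) with hu
    set v : ZMod K := (n : ZMod K) with hv
    obtain ⟨p, hp⟩ := hdiv m
    obtain ⟨q', hq⟩ := hdiv n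
    have hpC : (m : ℂ) - ((u.val : ℤ) : ℂ) = (k : ℂ) * p := by exact_mod_cast hp
    have hqC : (n : ℂ) - ((v.val : ℤ) : ℂ) = (k : ℂ) * q' := by exact_mod_cast hq
    rcases hε with hε | hε
    · refine ⟨(false, u, v), ?_⟩
      show QuotientGroup.mk _ = _
      refine coset_eq N _ g 1 lam ((u.val : ℤ) • a + (v.val : ℤ) • b) (by ring)
        (fun z => by
          show Tr ((u.val : ℤ) • a + (v.val : ℤ) • b) z = 1 * z + ((u.val : ℤ) • a + (v.val : ℤ) • b)
          rw [Tr_apply]; ring) (fun z => by rw [hg z, hε]) ?_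
      obtain ⟨h, hhN, hh⟩ := key p q'
      refine ⟨h, hhN, fun z => ?_⟩
      rw [hh z]
      congr 1
      simp only [zsmul_eq_mul, hmn]
      push_cast
      linear_combination (-a) * hpC + (-b) * hqC
    · refine ⟨(true, u, v), ?_⟩
      show QuotientGroup.mk _ = _
      refine coset_eq N _ g (-1) lam ((u.val : ℤ) • a + (v.val : ℤ) • b) (by ring)
        (fun z => by
          show Ro ((u.val : ℤ) • a + (v.val : ℤ) • b) z = -1 * z + ((u.val : ℤ) • a + (v.val : ℤ) • b)
          rw [Ro_apply]; ring) (fun z => by rw [hg z, hε]) ?_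
      obtain ⟨h, hhN, hh⟩ := key (-p) (-q')
      refine ⟨h, hhN, fun z => ?_⟩
      rw [hh z]
      congr 1
      simp only [zsmul_eq_mul, hmn]
      push_cast
      linear_combination a * hpC + b * hqC
  have : Finite (G ⧸ N) := Finite.of_surjective rep hsurj
  exact N.finiteIndex_of_finite_quotient
end Ctx
end VC

lemma VC.cyc (a b : ℂ) (S : AddSubgroup ℂ)
    (m₀ n₀ : ℤ) (hm₀ : m₀ ≠ 0)
    (hcoord : ∀ x ∈ S, ∃ m n : ℤ, x = m • a + n • b)
    (hrel : ∀ x ∈ S, ∀ m n : ℤ, x = m • a + n • b → m * n₀ = n * m₀) :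
    ∃ c ∈ S, S = AddSubgroup.zmultiples c := by
  let J : AddSubgroup ℤ := {
    carrier := {m : ℤ | ∃ n : ℤ, (m • a + n • b) ∈ S}
    zero_mem' := ⟨0, by simpa using S.zero_mem⟩
    add_mem' := by
      rintro m₁ m₂ ⟨n₁, h₁⟩ ⟨n₂, h₂⟩
      refine ⟨n₁ + n₂, ?_⟩
      have h := S.add_mem h₁ h₂
      convert h using 1
      simp only [zsmul_eq_mul]
      push_cast
      ring
    neg_mem' := by
      rintro m ⟨n, h⟩
      refine ⟨-n, ?_⟩
      have h' := S.neg_mem h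
      convert h' using 1
      simp only [zsmul_eq_mul]
      push_cast
      ring }
  obtain ⟨c, hc⟩ := Int.subgroup_cyclic J
  have hcJ : c ∈ J := hc ▸ AddSubgroup.subset_closure rfl
  obtain ⟨nc, hnc⟩ := hcJ
  refine ⟨c • a + nc • b, hnc, ?_⟩
  apply le_antisymm
  · intro x hx
    obtain ⟨m, n, hmn⟩ := hcoord x hx
    have hmJ : m ∈ J := ⟨n, hmn ▸ hx⟩
    rw [hc, AddSubgroup.mem_closure_singleton] at hmJ
    obtain ⟨t, ht⟩ := hmJ
    have htC : (t : ℂ) * c = m := by exact_mod_cast congrArg (Int.cast : ℤ → ℂ) ht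
    have hy : x - t • ((c : ℤ) • a + (nc : ℤ) • b) ∈ S := S.sub_mem hx (zsmul_mem hnc t)
    have hyrep : x - t • ((c : ℤ) • a + (nc : ℤ) • b) = (0 : ℤ) • a + (n - t * nc) • b := by
      rw [hmn]
      simp only [zsmul_eq_mul, smul_add, zsmul_eq_mul]
      push_cast
      linear_combination (-a) * htC
    have h0 := hrel _ hy 0 (n - t * nc) hyrep
    rw [zero_mul] at h0
    have hn : n = t * nc := by
      rcases mul_eq_zero.1 h0.symm with h | h
      · omega
      · exact absurd h hm₀
    rw [AddSubgroup.mem_zmultiples_iff]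
    refine ⟨t, ?_⟩
    have hnC : (n : ℂ) = (t : ℂ) * nc := by exact_mod_cast congrArg (Int.cast : ℤ → ℂ) hn
    rw [hmn]
    simp only [zsmul_eq_mul, smul_add]
    push_cast
    linear_combination a * htC - b * hnC
  · intro y hy
    rw [AddSubgroup.mem_zmultiples_iff] at hy
    obtain ⟨t, ht⟩ := hy
    exact ht ▸ zsmul_mem hnc t

/-- In `G₂ = ℤ² ⋊ ℤ₂` (affine maps `z ↦ ±z + λ`, `λ` in a lattice `Λ ⊂ ℂ`, with `ℤ₂`
acting by `−1`), every nontrivial normal subgroup containing a nontrivial rotation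
(an element `z ↦ −z + λ`) has finite index; consequently every nontrivial normal
subgroup of infinite index is generated by a single translation. -/
theorem vanishing_cycles_stmt1
    (Λ : AddSubgroup ℂ) (a b : ℂ)
    (hab : LinearIndependent ℝ ![a, b])
    (hΛ : Λ = AddSubgroup.closure {a, b})
    (G : Subgroup (ℂ ≃ᵃ[ℝ] ℂ))
    (hG : ∀ f : ℂ ≃ᵃ[ℝ] ℂ, f ∈ G ↔ ∃ (ε : ℂ) (lam : ℂ), (ε = 1 ∨ ε = -1) ∧ lam ∈ Λ ∧
      ∀ z : ℂ, f z = ε * z + lam)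
    (N : Subgroup G) (hN : N.Normal) (hne : N ≠ ⊥) :
    ((∃ ρ : G, ρ ∈ N ∧ ∃ lam ∈ Λ, ∀ z : ℂ, (ρ : ℂ ≃ᵃ[ℝ] ℂ) z = -z + lam) →
        N.FiniteIndex) ∧
    (¬ N.FiniteIndex →
      ∃ g : G, (∃ lam ∈ Λ, ∀ z : ℂ, (g : ℂ ≃ᵃ[ℝ] ℂ) z = z + lam) ∧
        N = Subgroup.zpowers g) := by
  have part1 : (∃ ρ : G, ρ ∈ N ∧ ∃ lam ∈ Λ, ∀ z : ℂ, (ρ : ℂ ≃ᵃ[ℝ] ℂ) z = -z + lam) →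
      N.FiniteIndex := by
    rintro ⟨ρ, hρN, lam, hlam, hρ⟩
    have conj2 : ∀ μ : ℂ, μ ∈ Λ → ∃ g ∈ N, ∀ z : ℂ,
        (g : ℂ ≃ᵃ[ℝ] ℂ) z = z + (2 : ℤ) • μ := by
      intro μ hμ
      let t : G := ⟨VC.Tr μ, VC.Tr_mem hG hμ⟩
      have ht : ∀ w : ℂ, (t : ℂ ≃ᵃ[ℝ] ℂ) w = w + μ := fun w => VC.Tr_apply μ w
      have ht1 : ∀ w : ℂ, (t : ℂ ≃ᵃ[ℝ] ℂ) w = 1 * w + μ := fun w => by rw [ht w]; ring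
      have htinv : ∀ w : ℂ, ((t : ℂ ≃ᵃ[ℝ] ℂ))⁻¹ w = w - μ := fun w => by
        have := VC.inv_apply (f := (t : ℂ ≃ᵃ[ℝ] ℂ)) (ε := 1) (lam := μ) (by ring) ht1 w
        simpa using this
      refine ⟨t * ρ * t⁻¹ * ρ, mul_mem (hN.conj_mem ρ hρN t) hρN, fun z => ?_⟩
      push_cast
      rw [VC.mul_apply, VC.mul_apply, VC.mul_apply]
      simp only [hρ, htinv, ht]
      simp only [zsmul_eq_mul]
      push_cast
      ring
    exact VC.fin_index hG hΛ 2 (by norm_num) N (conj2 a (VC.a_mem hΛ)) (conj2 b (VC.b_mem hΛ))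
  refine ⟨part1, ?_⟩
  intro hinf
  have htrans : ∀ g : G, g ∈ N → ∃ x, x ∈ Λ ∧ ∀ z : ℂ, (g : ℂ ≃ᵃ[ℝ] ℂ) z = z + x := by
    intro g hg
    obtain ⟨ε, lam, hε, hlam, hf⟩ := (hG _).1 g.2
    rcases hε with hε | hε
    · exact ⟨lam, hlam, fun z => by rw [hf z, hε]; ring⟩
    · exact absurd (part1 ⟨g, hg, lam, hlam, fun z => by rw [hf z, hε]; ring⟩) hinf
  let S : AddSubgroup ℂ := {
    carrier := {x : ℂ | ∃ g ∈ N, ∀ z : ℂ, (g : ℂ ≃ᵃ[ℝ] ℂ) z = z + x}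
    zero_mem' := ⟨1, one_mem N, fun z => by push_cast; rw [VC.one_apply']; ring⟩
    add_mem' := by
      rintro x y ⟨g, hgN, hg⟩ ⟨h, hhN, hh⟩
      exact ⟨g * h, mul_mem hgN hhN, fun z => by
        push_cast; rw [VC.mul_apply, hh, hg]; ring⟩
    neg_mem' := by
      rintro x ⟨g, hgN, hg⟩
      refine ⟨g⁻¹, inv_mem hgN, fun z => ?_⟩
      push_cast
      rw [VC.inv_apply (ε := 1) (lam := x) (by ring) (fun w => by rw [hg w]; ring) z]
      ring }
  have hSmem : ∀ x : ℂ, x ∈ S ↔ ∃ g ∈ N, ∀ z : ℂ, (g : ℂ ≃ᵃ[ℝ] ℂ) z = z + x :=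
    fun x => Iff.rfl
  have hSΛ : ∀ x ∈ S, x ∈ Λ := by
    intro x hx
    obtain ⟨g, hgN, hg⟩ := (hSmem x).1 hx
    obtain ⟨ε, lam, hε, hlam, hf⟩ := (hG _).1 g.2
    have h0 : lam = x := by
      have := (hf 0).symm.trans (hg 0)
      simpa using this
    exact h0 ▸ hlam
  have hScoord : ∀ x ∈ S, ∃ m n : ℤ, x = m • a + n • b :=
    fun x hx => VC.coords hΛ (hSΛ x hx)
  obtain ⟨g₀, hg₀ne⟩ := Subgroup.ne_bot_iff_exists_ne_one.1 hne
  obtain ⟨x₀, hx₀Λ, hx₀⟩ := htrans g₀ g₀.2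
  have hx₀S : x₀ ∈ S := ⟨(g₀ : G), g₀.2, hx₀⟩
  have hx₀ne : x₀ ≠ 0 := by
    intro h
    apply hg₀ne
    apply Subtype.ext
    apply Subtype.ext
    apply VC.ext_ae
    intro z
    have := hx₀ z
    rw [h, add_zero] at this
    rw [this]
    rfl
  obtain ⟨m₀, n₀, h₀⟩ := hScoord x₀ hx₀S
  have hrel : ∀ x ∈ S, ∀ m n : ℤ, x = m • a + n • b → m * n₀ = n * m₀ := by
    intro x hx m n hmn
    by_contra hne'
    have hd : m * n₀ - n * m₀ ≠ 0 := sub_ne_zero.2 hne'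
    have hda : (m * n₀ - n * m₀) • a ∈ S := by
      have h1 : (n₀ : ℤ) • x - (n : ℤ) • x₀ = (m * n₀ - n * m₀) • a := by
        rw [hmn, h₀]
        simp only [zsmul_eq_mul, smul_add]
        push_cast
        ring
      exact h1 ▸ S.sub_mem (zsmul_mem hx n₀) (zsmul_mem hx₀S n)
    have hdb : (m * n₀ - n * m₀) • b ∈ S := by
      have h1 : (m : ℤ) • x₀ - (m₀ : ℤ) • x = (m * n₀ - n * m₀) • b := by
        rw [hmn, h₀]
        simp only [zsmul_eq_mul, smul_add]
        push_cast
        ring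
      exact h1 ▸ S.sub_mem (zsmul_mem hx₀S m) (zsmul_mem hx m₀)
    exact hinf (VC.fin_index hG hΛ _ hd N ((hSmem _).1 hda) ((hSmem _).1 hdb))
  have hcyc : ∃ c ∈ S, S = AddSubgroup.zmultiples c := by
    by_cases hm₀ : m₀ ≠ 0
    · exact VC.cyc a b S m₀ n₀ hm₀ hScoord hrel
    · push_neg at hm₀
      have hn₀ : n₀ ≠ 0 := by
        intro hn
        apply hx₀ne
        rw [h₀, hm₀, hn]
        simp
      refine VC.cyc b a S n₀ m₀ hn₀ ?_ ?_
      · intro x hx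
        obtain ⟨m, n, h⟩ := hScoord x hx
        exact ⟨n, m, by rw [h, add_comm]⟩
      · intro x hx m n h
        exact (hrel x hx n m (by rw [h, add_comm])).symm
  obtain ⟨c, hcS, hSc⟩ := hcyc
  obtain ⟨g, hgN, hgtr⟩ := (hSmem c).1 hcS
  refine ⟨g, ⟨c, hSΛ c hcS, hgtr⟩, ?_⟩
  have hgc : (g : ℂ ≃ᵃ[ℝ] ℂ) = VC.Tr c := VC.ext_ae fun z => by rw [hgtr z, VC.Tr_apply]
  apply le_antisymm
  · intro h hh
    obtain ⟨x, hxΛ, hx⟩ := htrans h hh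
    have hxS : x ∈ S := ⟨h, hh, hx⟩
    rw [hSc, AddSubgroup.mem_zmultiples_iff] at hxS
    obtain ⟨t, ht⟩ := hxS
    rw [Subgroup.mem_zpowers_iff]
    refine ⟨t, ?_⟩
    apply Subtype.ext
    apply VC.ext_ae
    intro z
    push_cast
    rw [hgc, VC.Tr_zpow, ht, VC.Tr_apply, hx z]
  · exact Subgroup.zpowers_le.2 hgN
end
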